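/- arXiv:2306.08757 — 2 statements merged into one kernel-verified Lean document; each statement's English description precedes it below -/
import Mathlib

section
/- For i.i.d. standard Gumbel random variables g_1, ..., g_k and positive weights pi_1, ..., pi_k summing to 1, the probability that argmax_i (log pi_i + g_i) = j equals pi_j (the Gumbel-max trick). -/
open MeasureTheory ProbabilityTheory Finset

namespace GumbelAux
open Filter


noncomputable def F (x : ℝ) : ℝ := Real.exp (-Real.exp (-x))

lemma F_pos (x : ℝ) : 0 < F x := Real.exp_pos _

lemma F_lt_one (x : ℝ) : F x < 1 :=
  Real.exp_lt_one_iff.mpr (neg_neg_iff_pos.mpr (Real.exp_pos _))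

lemma F_le_one (x : ℝ) : F x ≤ 1 := (F_lt_one x).le

lemma F_continuous : Continuous F :=
  Real.continuous_exp.comp ((Real.continuous_exp.comp continuous_neg).neg)

lemma F_inv {u : ℝ} (hu0 : 0 < u) (hu1 : u < 1) :
    F (-Real.log (-Real.log u)) = u := by
  have hlu : 0 < -Real.log u := neg_pos.mpr (Real.log_neg hu0 hu1)
  rw [F, neg_neg, Real.exp_log hlu, neg_neg, Real.exp_log hu0]

lemma lt_F_iff {u : ℝ} (hu0 : 0 < u) (hu1 : u < 1) (ω : ℝ) :
    u < F ω ↔ -Real.log (-Real.log u) < ω := by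
  have hlu : 0 < -Real.log u := neg_pos.mpr (Real.log_neg hu0 hu1)
  rw [F, ← Real.log_lt_iff_lt_exp hu0, lt_neg, ← Real.lt_log_iff_exp_lt hlu, neg_lt]

lemma gumbel_Iio (ν : Measure ℝ) (hν : ∀ x, ν (Set.Iic x) = ENNReal.ofReal (F x)) (x : ℝ) :
    ν (Set.Iio x) = ENNReal.ofReal (F x) := by
  have hmono : Monotone (fun n : ℕ => Set.Iic (x - 1 / (n + 1))) := by
    intro m n hmn
    apply Set.Iic_subset_Iic.mpr
    have h1 : (1 : ℝ) / (n + 1) ≤ 1 / (m + 1) := by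
      apply one_div_le_one_div_of_le (by positivity)
      have := (Nat.cast_le (α := ℝ)).mpr hmn
      linarith
    linarith
  have hU : ⋃ n : ℕ, Set.Iic (x - 1 / ((n : ℝ) + 1)) = Set.Iio x := by
    ext y
    simp only [Set.mem_iUnion, Set.mem_Iic, Set.mem_Iio]
    constructor
    · rintro ⟨n, hn⟩
      have : (0 : ℝ) < 1 / ((n : ℝ) + 1) := by positivity
      linarith
    · intro hy
      obtain ⟨n, hn⟩ := exists_nat_one_div_lt (show 0 < x - y by linarith)
      exact ⟨n, by linarith⟩
  have h1 := tendsto_measure_iUnion_atTop (μ := ν) hmono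
  rw [hU] at h1
  have h2 : Tendsto (fun n : ℕ => ν (Set.Iic (x - 1 / (n + 1)))) atTop
      (nhds (ENNReal.ofReal (F x))) := by
    simp_rw [hν]
    apply (ENNReal.continuous_ofReal.tendsto _).comp
    apply (F_continuous.tendsto x).comp
    have : Tendsto (fun n : ℕ => x - 1 / ((n : ℝ) + 1)) atTop (nhds (x - 0)) :=
      tendsto_const_nhds.sub tendsto_one_div_add_atTop_nhds_zero_nat
    simpa using this
  exact tendsto_nhds_unique h1 h2

lemma gumbel_Ioi (ν : Measure ℝ) [IsProbabilityMeasure ν]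
    (hν : ∀ x, ν (Set.Iic x) = ENNReal.ofReal (F x)) (x : ℝ) :
    ν (Set.Ioi x) = ENNReal.ofReal (1 - F x) := by
  have h : Set.Ioi x = (Set.Iic x)ᶜ := (Set.compl_Iic).symm
  rw [h, measure_compl measurableSet_Iic (measure_ne_top _ _), hν, measure_univ,
    ← ENNReal.ofReal_one, ← ENNReal.ofReal_sub _ (F_pos x).le]

lemma gumbel_pow (ν : Measure ℝ) [IsProbabilityMeasure ν]
    (hν : ∀ x, ν (Set.Iic x) = ENNReal.ofReal (F x)) (a : ℝ) (ha : 0 ≤ a) :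
    ∫⁻ t, ENNReal.ofReal (F t ^ a) ∂ν = ENNReal.ofReal (1 / (1 + a)) := by
  rcases eq_or_lt_of_le ha with rfl | ha'
  · simp [Real.rpow_zero, lintegral_one, measure_univ]
  have hmble : Measurable fun t => F t ^ a :=
    (F_continuous.rpow_const (fun x => Or.inl (F_pos x).ne')).measurable
  rw [lintegral_eq_lintegral_meas_lt ν
    (Eventually.of_forall fun t => (Real.rpow_pos_of_pos (F_pos t) a).le) hmble.aemeasurable]
  have key : ∀ t ∈ Set.Ioi (0:ℝ), ν {ω | t < F ω ^ a} = ENNReal.ofReal (1 - t ^ a⁻¹) := by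
    intro t ht
    have ht0 : (0:ℝ) < t := ht
    rcases lt_or_ge t 1 with h1 | h1
    · have hu0 : 0 < t ^ a⁻¹ := Real.rpow_pos_of_pos ht0 _
      have hu1 : t ^ a⁻¹ < 1 := Real.rpow_lt_one ht0.le h1 (by positivity)
      have hset : {ω : ℝ | t < F ω ^ a} = Set.Ioi (-Real.log (-Real.log (t ^ a⁻¹))) := by
        ext ω
        simp only [Set.mem_setOf_eq, Set.mem_Ioi]
        rw [← Real.rpow_inv_lt_iff_of_pos ht0.le (F_pos ω).le ha', lt_F_iff hu0 hu1]
      rw [hset, gumbel_Ioi ν hν, F_inv hu0 hu1]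
    · have hset : {ω : ℝ | t < F ω ^ a} = ∅ := by
        ext ω
        simp only [Set.mem_setOf_eq, Set.mem_empty_iff_false, iff_false, not_lt]
        exact le_trans (Real.rpow_le_one (F_pos ω).le (F_le_one ω) ha) h1
      have h2 : (1:ℝ) ≤ t ^ a⁻¹ := Real.one_le_rpow h1 (by positivity)
      rw [hset, measure_empty, Eq.comm, ENNReal.ofReal_eq_zero]
      linarith
  rw [setLIntegral_congr_fun measurableSet_Ioi key]
  have hsplit : Set.Ioi (0:ℝ) = Set.Ioc 0 1 ∪ Set.Ioi 1 := (Set.Ioc_union_Ioi_eq_Ioi zero_le_one).symm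
  rw [hsplit, lintegral_union measurableSet_Ioi Set.Ioc_disjoint_Ioi_same]
  have hzero : ∫⁻ t in Set.Ioi (1:ℝ), ENNReal.ofReal (1 - t ^ a⁻¹) = 0 := by
    rw [setLIntegral_congr_fun measurableSet_Ioi
      (fun t (ht : t ∈ Set.Ioi (1:ℝ)) => ?_), lintegral_zero]
    have h2 : (1:ℝ) ≤ t ^ a⁻¹ := Real.one_le_rpow (le_of_lt ht) (by positivity)
    rw [ENNReal.ofReal_eq_zero]
    linarith
  rw [hzero, add_zero]
  have hii : IntervalIntegrable (fun t : ℝ => t ^ a⁻¹) MeasureTheory.volume 0 1 :=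
    intervalIntegral.intervalIntegrable_rpow (by left; positivity)
  have hInt : IntegrableOn (fun t : ℝ => 1 - t ^ a⁻¹) (Set.Ioc 0 1) := by
    have := (intervalIntegrable_const (c := (1:ℝ))).sub hii
    rw [intervalIntegrable_iff_integrableOn_Ioc_of_le zero_le_one] at this
    exact this
  rw [← ofReal_integral_eq_lintegral_ofReal hInt]
  · have hreal : ∫ t in Set.Ioc (0:ℝ) 1, (1 - t ^ a⁻¹) = 1 / (1 + a) := by
      rw [← intervalIntegral.integral_of_le zero_le_one,
        intervalIntegral.integral_sub intervalIntegrable_const hii,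
        integral_rpow (Or.inl (neg_one_lt_zero.trans (inv_pos.mpr ha'))), intervalIntegral.integral_const]
      rw [Real.one_rpow, Real.zero_rpow (by positivity)]
      have hne : a⁻¹ + 1 ≠ 0 := by positivity
      field_simp
      simp
    rw [hreal]
  · rw [EventuallyLE, ae_restrict_iff' measurableSet_Ioc]
    apply Eventually.of_forall
    intro t ht
    have h2 : t ^ a⁻¹ ≤ 1 := Real.rpow_le_one (le_of_lt ht.1) ht.2 (by positivity)
    simp only [Pi.zero_apply]
    linarith

end GumbelAux

open GumbelAux in
/-- The Gumbel-max trick: for i.i.d. standard Gumbel random variables `g_1,...,g_k`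
(CDF `x ↦ exp(-exp(-x))`) and a positive probability vector `π`, the probability that
`log π_j + g_j` strictly exceeds `log π_i + g_i` for all `i ≠ j` equals `π_j`. -/
theorem gumbel_max_trick
    {Ω : Type*} [MeasurableSpace Ω] (μ : Measure Ω) [IsProbabilityMeasure μ]
    {k : ℕ} (g : Fin k → Ω → ℝ)
    (hmeas : ∀ i, Measurable (g i))
    (hindep : iIndepFun g μ)
    (hcdf : ∀ i (x : ℝ),
      μ {ω | g i ω ≤ x} = ENNReal.ofReal (Real.exp (-Real.exp (-x))))
    (pi : Fin k → ℝ) (hpi : ∀ i, 0 < pi i) (hpi_sum : ∑ i, pi i = 1)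
    (j : Fin k) :
    μ {ω | ∀ i, i ≠ j → Real.log (pi i) + g i ω < Real.log (pi j) + g j ω}
      = ENNReal.ofReal (pi j) := by
  classical
  obtain ⟨n, rfl⟩ : ∃ n, k = n + 1 := by
    cases k with
    | zero => simp at hpi_sum
    | succ n => exact ⟨n, rfl⟩
  set c : Fin (n + 1) → ℝ := fun i => Real.log (pi i) with hc
  set ν : Fin (n + 1) → Measure ℝ := fun i => μ.map (g i) with hnu
  haveI hprob : ∀ i, IsProbabilityMeasure (ν i) := fun i =>
    Measure.isProbabilityMeasure_map (hmeas i).aemeasurable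
  have hν : ∀ i x, ν i (Set.Iic x) = ENNReal.ofReal (F x) := by
    intro i x
    rw [hnu]
    rw [Measure.map_apply (hmeas i) measurableSet_Iic]
    exact hcdf i x
  set G : Ω → (Fin (n + 1) → ℝ) := fun ω i => g i ω with hGdef
  have hGm : Measurable G := measurable_pi_iff.mpr hmeas
  have hmap : Measure.pi ν = μ.map G := by
    apply Measure.pi_eq
    intro s hs
    rw [Measure.map_apply hGm (MeasurableSet.univ_pi hs)]
    have hpre : G ⁻¹' (Set.pi Set.univ s) = ⋂ i, g i ⁻¹' s i := by
      ext ω; simp [Set.mem_pi, hGdef]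
    rw [hpre, hindep.meas_iInter (fun i => ⟨s i, hs i, rfl⟩)]
    exact Finset.prod_congr rfl fun i _ => (Measure.map_apply (hmeas i) (hs i)).symm
  set S : Set (Fin (n + 1) → ℝ) := {x | ∀ i, i ≠ j → c i + x i < c j + x j} with hS
  have hSrw : S = ⋂ i, ⋂ (_ : i ≠ j), {x : Fin (n + 1) → ℝ | c i + x i < c j + x j} := by
    ext x; simp [hS]
  have hSm : MeasurableSet S := by
    rw [hSrw]
    exact MeasurableSet.iInter fun i => MeasurableSet.iInter fun _ =>
      measurableSet_lt (measurable_const.add (measurable_pi_apply i))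
        (measurable_const.add (measurable_pi_apply j))
  have hevent : {ω | ∀ i, i ≠ j → Real.log (pi i) + g i ω < Real.log (pi j) + g j ω}
      = G ⁻¹' S := rfl
  rw [hevent, ← Measure.map_apply hGm hSm, ← hmap]
  -- Fubini via succAbove
  set T : Set (ℝ × (Fin n → ℝ)) := {p | ∀ m, c (j.succAbove m) + p.2 m < c j + p.1} with hT
  have hTm : MeasurableSet T := by
    have : T = ⋂ m, {p : ℝ × (Fin n → ℝ) | c (j.succAbove m) + p.2 m < c j + p.1} := by
      ext p; simp [hT]
    rw [this]
    exact MeasurableSet.iInter fun m =>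
      measurableSet_lt (by fun_prop) (by fun_prop)
  set e := MeasurableEquiv.piFinSuccAbove (fun _ : Fin (n + 1) => ℝ) j with he
  have hpre : e ⁻¹' T = S := by
    ext x
    have hex : e x = (x j, fun m => x (j.succAbove m)) := rfl
    simp only [Set.mem_preimage, hex, hT, Set.mem_setOf_eq, hS]
    constructor
    · intro h i hij
      obtain ⟨m, rfl⟩ := Fin.exists_succAbove_eq hij
      exact h m
    · intro h m
      exact h _ (Fin.succAbove_ne j m)
  have hmp := measurePreserving_piFinSuccAbove ν j
  rw [← hpre, hmp.measure_preimage hTm.nullMeasurableSet, Measure.prod_apply hTm]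
  set a : ℝ := (∑ m : Fin n, pi (j.succAbove m)) / pi j with ha
  have ha0 : 0 ≤ a := by
    apply div_nonneg _ (hpi j).le
    exact Finset.sum_nonneg fun m _ => (hpi _).le
  have hinner : ∀ t : ℝ,
      (Measure.pi fun m => ν (j.succAbove m)) (Prod.mk t ⁻¹' T) = ENNReal.ofReal (F t ^ a) := by
    intro t
    have hsec : (Prod.mk t ⁻¹' T) =
        Set.pi Set.univ (fun m => Set.Iio (c j + t - c (j.succAbove m))) := by
      ext y
      simp only [Set.mem_preimage, hT, Set.mem_setOf_eq, Set.mem_univ_pi, Set.mem_Iio]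
      exact forall_congr' fun m => by constructor <;> intro <;> linarith
    rw [hsec, Measure.pi_pi]
    have h1 : ∀ m : Fin n, ν (j.succAbove m) (Set.Iio (c j + t - c (j.succAbove m)))
        = ENNReal.ofReal (F (c j + t - c (j.succAbove m))) := fun m =>
      gumbel_Iio _ (hν _) _
    rw [Finset.prod_congr rfl fun m _ => h1 m,
      ← ENNReal.ofReal_prod_of_nonneg (fun m _ => (F_pos _).le)]
    congr 1
    have hFd : ∀ i : Fin (n + 1), F (c j + t - c i)
        = Real.exp (-(pi i / pi j * Real.exp (-t))) := by
      intro i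
      rw [F]
      congr 2
      rw [show -(c j + t - c i) = c i - c j + (-t) by ring, Real.exp_add, Real.exp_sub, hc,
        Real.exp_log (hpi i), Real.exp_log (hpi j)]
    rw [Finset.prod_congr rfl fun m _ => hFd (j.succAbove m), ← Real.exp_sum]
    have hFa : F t ^ a = Real.exp (-Real.exp (-t) * a) := by
      rw [F, ← Real.exp_mul]
    rw [hFa]
    congr 1
    rw [Finset.sum_neg_distrib, ← Finset.sum_mul, ← Finset.sum_div]
    ring
  rw [lintegral_congr hinner, gumbel_pow (ν j) (hν j) a ha0]
  congr 1
  have hsum : ∑ m : Fin n, pi (j.succAbove m) = 1 - pi j := by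
    have := Fin.sum_univ_succAbove pi j
    rw [hpi_sum] at this
    linarith
  rw [ha, hsum]
  have hpj := hpi j
  field_simp
  ring
end

section
/- For a joint pmf q(x,z) on finite sets with X having n elements of equal probability 1/N each grouped into N blocks B_1,...,B_N, if the conditional q(z|x) equals N*p(z)*1[z in A_i] for x in B_i, where {A_i} partitions the support of p with p(A_i) = 1/N for each i, then the marginal of z equals p(z) and the mutual information I(X;Z) equals log N. -/
open Finset Real

/-- The construction in the proof of Proposition 5.2: partition the support of `p` into
`N` blocks `A_1,...,A_N` of `p`-probability `1/N` each, partition `X` into `N` blocks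
`B_1,...,B_N` of `q`-probability `1/N` each, and set `q(z|x) = N·p(z)·1[z ∈ A_{i}]`
for `x ∈ B_i`. Then the marginal of `z` under the joint `q(x)q(z|x)` equals `p(z)`, and
the mutual information `I(X;Z)` equals `log N`. -/
theorem prop52_construction_marginal_and_mutualInfo
    {X Z : Type*} [Fintype X] [Fintype Z]
    (N : ℕ) (hN : 0 < N)
    (p : Z → ℝ) (hp_nonneg : ∀ z, 0 ≤ p z) (hp_sum : ∑ z, p z = 1)
    (A : Z → Fin N) (hA : ∀ i, ∑ z ∈ Finset.univ.filter (fun z => A z = i), p z = 1 / N)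
    (q0 : X → ℝ) (hq0_nonneg : ∀ x, 0 ≤ q0 x) (hq0_sum : ∑ x, q0 x = 1)
    (B : X → Fin N) (hB : ∀ i, ∑ x ∈ Finset.univ.filter (fun x => B x = i), q0 x = 1 / N)
    (qc : X → Z → ℝ)
    (hqc : ∀ x z, qc x z = if A z = B x then (N : ℝ) * p z else 0) :
    (∀ z, ∑ x, q0 x * qc x z = p z)
    ∧ (∑ x, ∑ z, (q0 x * qc x z) *
          Real.log ((q0 x * qc x z) /
            ((∑ z', q0 x * qc x z') * (∑ x', q0 x' * qc x' z))))
        = Real.log N := by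
  have hNr : (N : ℝ) ≠ 0 := Nat.cast_ne_zero.mpr hN.ne'
  have marg : ∀ z, ∑ x, q0 x * qc x z = p z := by
    intro z
    have h1 : ∑ x, q0 x * qc x z
        = ∑ x, (if B x = A z then q0 x * ((N : ℝ) * p z) else 0) := by
      apply Finset.sum_congr rfl
      intro x _
      rw [hqc]
      by_cases h : A z = B x
      · rw [if_pos h, if_pos h.symm]
      · rw [if_neg h, if_neg (fun hh => h hh.symm), mul_zero]
    rw [h1, ← Finset.sum_filter, ← Finset.sum_mul, hB (A z)]
    field_simp
  have row : ∀ x, ∑ z, q0 x * qc x z = q0 x := by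
    intro x
    have h1 : ∑ z, q0 x * qc x z
        = ∑ z, (if A z = B x then (q0 x * (N : ℝ)) * p z else 0) := by
      apply Finset.sum_congr rfl
      intro z _
      rw [hqc]
      by_cases h : A z = B x
      · simp [h]; ring
      · simp [h]
    rw [h1, ← Finset.sum_filter, ← Finset.mul_sum, hA (B x)]
    field_simp
  refine ⟨marg, ?_⟩
  have key : ∀ x z, (q0 x * qc x z) *
          Real.log ((q0 x * qc x z) /
            ((∑ z', q0 x * qc x z') * (∑ x', q0 x' * qc x' z)))
      = (if A z = B x then (q0 x * ((N : ℝ) * p z)) * Real.log N else 0) := by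
    intro x z
    rw [row x, marg z, hqc]
    by_cases h : A z = B x
    · simp only [h, if_true]
      by_cases hx : q0 x = 0
      · simp [hx]
      by_cases hz : p z = 0
      · simp [hz]
      congr 1
      rw [show q0 x * ((N : ℝ) * p z) / (q0 x * p z) = (N : ℝ) by field_simp]
    · simp [h]
  have inner : ∀ x, ∑ z, (if A z = B x then (q0 x * ((N : ℝ) * p z)) * Real.log N else 0)
      = q0 x * Real.log N := by
    intro x
    rw [← Finset.sum_filter]
    have h2 : ∑ z ∈ Finset.univ.filter (fun z => A z = B x),
        (q0 x * ((N : ℝ) * p z)) * Real.log N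
        = (q0 x * (N : ℝ) * Real.log N) *
          ∑ z ∈ Finset.univ.filter (fun z => A z = B x), p z := by
      rw [Finset.mul_sum]
      apply Finset.sum_congr rfl
      intros; ring
    rw [h2, hA (B x)]
    field_simp
  calc ∑ x, ∑ z, (q0 x * qc x z) *
          Real.log ((q0 x * qc x z) /
            ((∑ z', q0 x * qc x z') * (∑ x', q0 x' * qc x' z)))
      = ∑ x, q0 x * Real.log N := by
        apply Finset.sum_congr rfl
        intro x _
        rw [← inner x]
        exact Finset.sum_congr rfl (fun z _ => key x z)
    _ = Real.log N := by rw [← Finset.sum_mul, hq0_sum, one_mul]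
end
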